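/- The state-passing algorithm is correct: splitting an input of length N = C·N' into C chunks, computing each chunk's output as y^{(c)} = M_{xy} x^{(c-1)} + f * u^{(c)} + D u^{(c)} and updating the carried state as x^{(c)} = A^{N'} x^{(c-1)} + M_{ux} u^{(c)} (with x^{(0)} = 0), yields the same output as running the full SSM recurrence on the entire length-N input. -/

import Mathlib

open Matrix Finset

lemma ssm_unroll {m : ℕ} (A : Matrix (Fin m) (Fin m) ℝ) (B : Fin m → ℝ)
    (u : ℕ → ℝ) (x : ℕ → Fin m → ℝ)
    (hx : ∀ i, x (i + 1) = A.mulVec (x i) + u (i + 1) • B) :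
    ∀ n k, x (n + k) = (A ^ k).mulVec (x n)
      + ∑ j ∈ Finset.Icc 1 k, u (n + j) • (A ^ (k - j)).mulVec B := by
  intro n k
  induction k with
  | zero => simp [Matrix.one_mulVec]
  | succ k ih =>
    rw [← Nat.add_assoc, hx, ih]
    rw [Finset.sum_Icc_succ_top (by omega : 1 ≤ k + 1)]
    rw [Matrix.mulVec_add, Matrix.mulVec_mulVec, ← pow_succ']
    have hs : A.mulVec (∑ j ∈ Finset.Icc 1 k, u (n + j) • (A ^ (k - j)).mulVec B)
        = ∑ j ∈ Finset.Icc 1 k, u (n + j) • (A ^ (k + 1 - j)).mulVec B := by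
      rw [← Matrix.mulVecLin_apply, map_sum]
      refine Finset.sum_congr rfl fun j hj => ?_
      simp only [Finset.mem_Icc] at hj
      rw [_root_.map_smul, Matrix.mulVecLin_apply, Matrix.mulVec_mulVec, ← pow_succ',
        show k - j + 1 = k + 1 - j from by omega]
    rw [hs]
    simp [add_assoc, Nat.add_assoc]

/-- Correctness of the state-passing algorithm: processing the input in chunks of size N',
computing each chunk's output from the carried state `xs c` via
y^{(c)} = M_xy xs^{(c)} + (f * u^{(c)}) + D u^{(c)} and updating the carried state via
xs^{(c+1)} = A^{N'} xs^{(c)} + M_ux u^{(c)} (with xs^{(0)} = 0), yields the same output as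
running the full SSM recurrence on the entire input. -/
theorem state_passing_correct {m : ℕ}
    (A : Matrix (Fin m) (Fin m) ℝ) (B C : Fin m → ℝ) (D : ℝ)
    (N' : ℕ) (u : ℕ → ℝ)
    (x : ℕ → Fin m → ℝ) (y : ℕ → ℝ)
    (hx0 : x 0 = 0)
    (hx : ∀ i, x (i + 1) = A.mulVec (x i) + u (i + 1) • B)
    (hy : ∀ i, y i = C ⬝ᵥ x i + D * u i)
    (xs : ℕ → Fin m → ℝ) (hxs0 : xs 0 = 0)
    (hxs : ∀ c, xs (c + 1) =
      (A ^ N').mulVec (xs c) + ∑ i ∈ Finset.Icc 1 N', u (c * N' + i) • (A ^ (N' - i)).mulVec B)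
    (ys : ℕ → ℕ → ℝ)
    (hys : ∀ c r, ys c r =
      C ⬝ᵥ (A ^ r).mulVec (xs c)
        + (∑ j ∈ Finset.Icc 1 r, (C ⬝ᵥ (A ^ (r - j)).mulVec B) * u (c * N' + j))
        + D * u (c * N' + r)) :
    ∀ c r : ℕ, 1 ≤ r → r ≤ N' → ys c r = y (c * N' + r) := by
  have hxsx : ∀ c, xs c = x (c * N') := by
    intro c
    induction c with
    | zero => simp [hxs0, hx0]
    | succ c ih =>
      rw [hxs, ih, show (c + 1) * N' = c * N' + N' from by ring,
        ssm_unroll A B u x hx (c * N') N']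
  intro c r _ _
  rw [hys, hy, hxsx, ssm_unroll A B u x hx (c * N') r]
  congr 1
  rw [dotProduct_add]
  congr 1
  simp only [dotProduct, Finset.sum_apply, Pi.smul_apply, smul_eq_mul,
    Finset.mul_sum, Finset.sum_mul]
  rw [Finset.sum_comm]
  exact Finset.sum_congr rfl fun j _ => Finset.sum_congr rfl fun i _ => by ring
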